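/- For an odd prime p with p ≡ 3 (mod 4), the Legendre sequence s of length p (with s_0 = 0, s_k = 1 if k is a nonzero quadratic residue mod p, s_k = -1 otherwise) has all off-peak periodic autocorrelations equal to -1; that is, for every shift t with t ≢ 0 (mod p), ∑_{k=0}^{p-1} s_k · s_{(k+t) mod p} = -1. -/

import Mathlib

theorem legendre_seq_offpeak_autocorrelation_three_mod_four
    (p : ℕ) [Fact p.Prime] (hp : Odd p) (h3 : p % 4 = 3)
    (s : ZMod p → ℤ) (hs : ∀ k, s k = quadraticChar (ZMod p) k)
    (t : ZMod p) (ht : t ≠ 0) :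
    ∑ k : ZMod p, s k * s (k + t) = -1 := by
  classical
  have hp2 : p ≠ 2 := by rintro rfl; simp at h3
  have hc : ringChar (ZMod p) ≠ 2 := by
    rw [ZMod.ringChar_zmod_n]; exact hp2
  simp only [hs]
  set χ := quadraticChar (ZMod p) with hχ
  have hsplit : ∑ k : ZMod p, (χ k : ℤ) * χ (k + t)
      = ∑ k ∈ Finset.univ.erase (0 : ZMod p), (χ k : ℤ) * χ (k + t) := by
    rw [← Finset.sum_erase]
    simp [hχ]
  rw [hsplit]
  have key : ∀ k ∈ Finset.univ.erase (0 : ZMod p),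
      (χ k : ℤ) * χ (k + t) = χ (1 + t * k⁻¹) := by
    intro k hk
    have hk0 : k ≠ 0 := Finset.ne_of_mem_erase hk
    rw [← map_mul]
    have hfact : k * (k + t) = k ^ 2 * (1 + t * k⁻¹) := by
      field_simp
    rw [hfact, map_mul, quadraticChar_sq_one' hk0, one_mul]
  rw [Finset.sum_congr rfl key]
  have hbij : ∑ k ∈ Finset.univ.erase (0 : ZMod p), (χ (1 + t * k⁻¹) : ℤ)
      = ∑ y ∈ Finset.univ.erase (1 : ZMod p), (χ y : ℤ) := by
    apply Finset.sum_nbij' (fun k => 1 + t * k⁻¹) (fun y => t * (y - 1)⁻¹)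
    · intro k hk
      have hk0 : k ≠ 0 := Finset.ne_of_mem_erase hk
      refine Finset.mem_erase.2 ⟨?_, Finset.mem_univ _⟩
      intro h
      have : t * k⁻¹ = 0 := by linear_combination h
      rcases mul_eq_zero.1 this with h' | h'
      · exact ht h'
      · exact hk0 (inv_eq_zero.mp h')
    · intro y hy
      have hy1 : y ≠ 1 := Finset.ne_of_mem_erase hy
      refine Finset.mem_erase.2 ⟨?_, Finset.mem_univ _⟩
      intro h
      rcases mul_eq_zero.1 h with h' | h'
      · exact ht h'
      · exact hy1 (by
          have := inv_eq_zero.mp h'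
          linear_combination this)
    · intro k hk
      have hk0 : k ≠ 0 := Finset.ne_of_mem_erase hk
      field_simp
      simp [ht]
    · intro y hy
      have hy1 : y ≠ 1 := Finset.ne_of_mem_erase hy
      have hy1' : y - 1 ≠ 0 := sub_ne_zero.2 hy1
      field_simp
      ring
    · intro k hk; rfl
  rw [hbij, ← Finset.add_sum_erase _ _ (Finset.mem_univ (1 : ZMod p))] at *
  have htot : ∑ y : ZMod p, (χ y : ℤ) = 0 := quadraticChar_sum_zero hc
  have h1 : (χ (1 : ZMod p) : ℤ) = 1 := by simp [hχ]
  have := htot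
  rw [← Finset.add_sum_erase _ _ (Finset.mem_univ (1 : ZMod p)), h1] at this
  linarith
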